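/- Let n ≥ 1 and consider the rack (ℤ^n, ◁). Every maximal connected subrack of (ℤ^n, ◁) is a cyclic rack: if S is a connected subrack of (ℤ^n, ◁) containing some point x and containing every connected subrack that contains x, then there exist a natural number k and a bijection f : S → ℤ/kℤ (where ℤ/0ℤ = ℤ) such that f(a ◁ b) = f(a) + 1 for all a, b ∈ S. -/

import Mathlib

/-- The rack operation `◁` on `ℤ^n`:
`(x ◁ y)_i = (((x_i ∗ y_1) ∗ y_2) ⋯) ∗ y_n`, where `a ∗ b = 2b − a`. -/
def tri (n : ℕ) (x y : Fin n → ℤ) : Fin n → ℤ :=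
  fun i => (List.ofFn y).foldl (fun a b => 2 * b - a) (x i)

/-- `S` is a subrack: closed under the operation `op` and its inverse `inv`. -/
def IsSubrack {α : Type*} (op inv : α → α → α) (S : Set α) : Prop :=
  ∀ x ∈ S, ∀ y ∈ S, op x y ∈ S ∧ inv x y ∈ S

/-- `S` is connected: any `v ∈ S` is obtained from any `u ∈ S` by finitely many
right translations `z ↦ op z s`, `z ↦ inv z s` with `s ∈ S`. -/
def IsConnectedSubrack {α : Type*} (op inv : α → α → α) (S : Set α) : Prop :=
  ∀ u ∈ S, ∀ v ∈ S,
    Relation.ReflTransGen (fun a b => ∃ s ∈ S, b = op a s ∨ b = inv a s) u v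

/-- `M` is the maximal connected subrack containing `x`: a connected subrack
containing `x` that contains every connected subrack containing `x`. -/
def IsMaxConnSubrack {α : Type*} (op inv : α → α → α) (x : α) (M : Set α) : Prop :=
  IsSubrack op inv M ∧ IsConnectedSubrack op inv M ∧ x ∈ M ∧
    ∀ S : Set α, IsSubrack op inv S → IsConnectedSubrack op inv S → x ∈ S → S ⊆ M

open Relation

lemma foldl_split (L : List ℤ) (a : ℤ) :
    L.foldl (fun a b => 2 * b - a) a
      = (-1) ^ L.length * a + L.foldl (fun a b => 2 * b - a) 0 := by
  induction L generalizing a with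
  | nil => simp
  | cons b L ih =>
    simp only [List.foldl_cons, List.length_cons]
    rw [ih (2 * b - a), ih (2 * b - 0)]
    ring

def Cc (n : ℕ) (y : Fin n → ℤ) : ℤ := (List.ofFn y).foldl (fun a b => 2 * b - a) 0

lemma tri_eq (n : ℕ) (x y : Fin n → ℤ) :
    tri n x y = fun i => (-1) ^ n * x i + Cc n y := by
  funext i
  simpa [tri, Cc] using foldl_split (List.ofFn y) (x i)

lemma foldl_map_affine (a t : ℤ) (L : List ℤ) :
    (L.map (fun z => a * z + t)).foldl (fun u b => 2 * b - u) 0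
      = a * L.foldl (fun u b => 2 * b - u) 0 + (if Even L.length then 0 else 2 * t) := by
  induction L with
  | nil => simp
  | cons b L ih =>
    simp only [List.map_cons, List.foldl_cons, List.length_cons]
    rw [foldl_split (L.map _) (2 * (a * b + t) - 0), foldl_split L (2 * b - 0), ih,
      List.length_map]
    rcases Nat.even_or_odd L.length with h | h
    · rw [if_pos h, if_neg (by simpa [Nat.even_add_one] using h), h.neg_one_pow]
      ring
    · rw [if_neg (Nat.not_even_iff_odd.mpr h),
        if_pos (Nat.even_add_one.mpr (Nat.not_even_iff_odd.mpr h)), h.neg_one_pow]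
      ring

lemma Cc_affine (n : ℕ) (a t : ℤ) (y : Fin n → ℤ) :
    Cc n (fun i => a * y i + t) = a * Cc n y + (if Even n then 0 else 2 * t) := by
  have h : List.ofFn (fun i => a * y i + t) = (List.ofFn y).map (fun z => a * z + t) := by
    rw [List.map_ofFn]; rfl
  simpa [Cc, h] using foldl_map_affine a t (List.ofFn y)

lemma Cc_const (n : ℕ) (k : ℤ) :
    Cc n (fun _ => k) = if Even n then 0 else 2 * k := by
  have := Cc_affine n 0 k (fun _ => 0)
  simpa using this

lemma dvd_all_pow_two (t : ℤ) (h : ∀ m : ℕ, (2 ^ m : ℤ) ∣ t) : t = 0 := by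
  by_contra ht
  have h1 : (2 ^ t.natAbs : ℤ) ≤ |t| :=
    Int.le_of_dvd (abs_pos.mpr ht) ((dvd_abs _ _).mpr (h _))
  have h2 : |t| < 2 ^ t.natAbs := by
    rw [Int.abs_eq_natAbs]
    exact_mod_cast Nat.lt_two_pow_self (n := t.natAbs)
  linarith

theorem stmt_19 (n : ℕ) (hn : 1 ≤ n)
    (inv : (Fin n → ℤ) → (Fin n → ℤ) → (Fin n → ℤ))
    (hinv₁ : ∀ x y, inv (tri n x y) y = x) (hinv₂ : ∀ x y, tri n (inv x y) y = x)
    (x : Fin n → ℤ) (S : Set (Fin n → ℤ))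
    (hS : IsMaxConnSubrack (tri n) inv x S) :
    ∃ (k : ℕ) (f : (Fin n → ℤ) → ZMod k),
      Set.BijOn f S Set.univ ∧ ∀ a ∈ S, ∀ b ∈ S, f (tri n a b) = f a + 1 := by
  obtain ⟨hSub, hConn, hxS, hMax⟩ := hS
  set c : ℤ := Cc n x with hc_def
  rcases Nat.even_or_odd n with heven | hodd
  · -- EVEN CASE
    have hpow : ((-1 : ℤ)) ^ n = 1 := heven.neg_one_pow
    have htri : ∀ a b : Fin n → ℤ, tri n a b = fun i => a i + Cc n b := by
      intro a b; rw [tri_eq]; simp [hpow]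
    have hinv_eq : ∀ a b : Fin n → ℤ, inv a b = fun i => a i - Cc n b := by
      intro a b
      have h1 : tri n (fun i => a i - Cc n b) b = a := by
        rw [htri]; funext i; ring
      calc inv a b = inv (tri n (fun i => a i - Cc n b) b) b := by rw [h1]
        _ = _ := hinv₁ _ _
    have hcline : ∀ t : ℤ, Cc n (fun i => x i + t) = c := by
      intro t
      have h : (fun i => x i + t) = fun i => 1 * x i + t := by funext i; ring
      rw [h, Cc_affine, if_pos heven]; ring
    have hline : ∀ v, Relation.ReflTransGen
        (fun a b => ∃ s ∈ S, b = tri n a s ∨ b = inv a s) x v →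
        ∃ t : ℤ, v = fun i => x i + t := by
      intro v h
      induction h with
      | refl => exact ⟨0, by funext i; simp⟩
      | tail _ hstep ih =>
        obtain ⟨t, hb⟩ := ih
        obtain ⟨s, _, hcase | hcase⟩ := hstep
        · exact ⟨t + Cc n s, by rw [hcase, htri, hb]; funext i; ring⟩
        · exact ⟨t - Cc n s, by rw [hcase, hinv_eq, hb]; funext i; ring⟩
    have hcS : ∀ s ∈ S, Cc n s = c := by
      intro s hs
      obtain ⟨t, rfl⟩ := hline s (hConn x hxS s hs)
      exact hcline t
    have hline2 : ∀ v, Relation.ReflTransGen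
        (fun a b => ∃ s ∈ S, b = tri n a s ∨ b = inv a s) x v →
        ∃ m : ℤ, v = fun i => x i + m * c := by
      intro v h
      induction h with
      | refl => exact ⟨0, by funext i; simp⟩
      | tail _ hstep ih =>
        obtain ⟨m, hb⟩ := ih
        obtain ⟨s, hs, hcase | hcase⟩ := hstep
        · exact ⟨m + 1, by rw [hcase, htri, hb, hcS s hs]; funext i; ring⟩
        · exact ⟨m - 1, by rw [hcase, hinv_eq, hb, hcS s hs]; funext i; ring⟩
    set M : Set (Fin n → ℤ) := {v | ∃ m : ℤ, v = fun i => x i + m * c} with hM_def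
    have hxM : x ∈ M := ⟨0, by funext i; simp⟩
    have hcM : ∀ v ∈ M, Cc n v = c := by
      rintro v ⟨m, rfl⟩; exact hcline _
    have hMsub : IsSubrack (tri n) inv M := by
      rintro a ⟨m, rfl⟩ b hb
      refine ⟨⟨m + 1, ?_⟩, ⟨m - 1, ?_⟩⟩
      · rw [htri, hcM b hb]; funext i; ring
      · rw [hinv_eq, hcM b hb]; funext i; ring
    have hMconn : IsConnectedSubrack (tri n) inv M := by
      have key : ∀ u ∈ M, ∀ j : ℤ,
          Relation.ReflTransGen (fun a b => ∃ s ∈ M, b = tri n a s ∨ b = inv a s)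
            u (fun i => u i + j * c) := by
        intro u hu j
        induction j using Int.induction_on with
        | zero =>
          have he : (fun i => u i + (0 : ℤ) * c) = u := by funext i; simp
          rw [he]
        | succ j ih =>
          refine ih.tail ⟨x, hxM, Or.inl ?_⟩
          rw [htri, ← hc_def]; funext i; ring
        | pred j ih =>
          refine ih.tail ⟨x, hxM, Or.inr ?_⟩
          rw [hinv_eq, ← hc_def]; funext i; ring
      rintro u hu v hv
      obtain ⟨m', hv'⟩ := hv
      obtain ⟨m, hu'⟩ := id hu
      have h := key u hu (m' - m)
      have he : (fun i => u i + (m' - m) * c) = v := by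
        rw [hu', hv']; funext i; ring
      rwa [he] at h
    have hMS : M ⊆ S := hMax M hMsub hMconn hxM
    have hSM : S ⊆ M := fun v hv => hline2 v (hConn x hxS v hv)
    rcases eq_or_ne c 0 with hc0 | hc0
    · -- S = {x}
      have hSx : S = {x} := by
        apply Set.Subset.antisymm
        · intro v hv
          obtain ⟨m, rfl⟩ := hSM hv
          have : (fun i => x i + m * c) = x := by funext i; rw [hc0]; ring
          rw [this]; rfl
        · rintro v rfl; exact hxS
      refine ⟨1, fun _ => 0, ⟨fun a _ => trivial, fun a ha b hb _ => ?_, fun w _ => ?_⟩,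
        fun a _ b _ => Subsingleton.elim _ _⟩
      · rw [hSx, Set.mem_singleton_iff] at ha hb; rw [ha, hb]
      · exact ⟨x, hxS, Subsingleton.elim _ _⟩
    · -- S ≅ ℤ
      have hdiv : ∀ m : ℤ, (x ⟨0, hn⟩ + m * c - x ⟨0, hn⟩) / c = m := by
        intro m
        have h : x ⟨0, hn⟩ + m * c - x ⟨0, hn⟩ = m * c := by ring
        rw [h]
        exact Int.mul_ediv_cancel m hc0
      refine ⟨0, fun z => (((z ⟨0, hn⟩ - x ⟨0, hn⟩) / c : ℤ) : ZMod 0),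
        ⟨fun a _ => trivial, ?_, ?_⟩, ?_⟩
      · intro a ha b hb hab
        obtain ⟨ma, rfl⟩ := hSM ha
        obtain ⟨mb, rfl⟩ := hSM hb
        simp only at hab
        rw [hdiv ma, hdiv mb] at hab
        have : ma = mb := Int.cast_injective hab
        rw [this]
      · intro w _
        obtain ⟨m, rfl⟩ := ZMod.intCast_surjective (n := 0) w
        refine ⟨fun i => x i + m * c, hMS ⟨m, rfl⟩, ?_⟩
        show (((x ⟨0, hn⟩ + m * c - x ⟨0, hn⟩) / c : ℤ) : ZMod 0) = (m : ZMod 0)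
        rw [hdiv m]
      · intro a ha b hb
        obtain ⟨m, rfl⟩ := hSM ha
        have htr : tri n (fun i => x i + m * c) b = fun i => x i + (m + 1) * c := by
          rw [htri, hcS b hb]; funext i; ring
        rw [htr]
        show (((x ⟨0, hn⟩ + (m + 1) * c - x ⟨0, hn⟩) / c : ℤ) : ZMod 0)
          = (((x ⟨0, hn⟩ + m * c - x ⟨0, hn⟩) / c : ℤ) : ZMod 0) + 1
        rw [hdiv m, hdiv (m + 1)]
  · -- ODD CASE
    have hpow : ((-1 : ℤ)) ^ n = -1 := hodd.neg_one_pow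
    have htri : ∀ a b : Fin n → ℤ, tri n a b = fun i => -a i + Cc n b := by
      intro a b; rw [tri_eq]; simp [hpow]
    have hinvol : ∀ a b : Fin n → ℤ, tri n (tri n a b) b = a := by
      intro a b
      rw [htri a b, htri]
      funext i
      show -((fun i => -a i + Cc n b) i) + Cc n b = a i
      simp
    have hinvo : ∀ a b : Fin n → ℤ, inv a b = tri n a b := by
      intro a b
      calc inv a b = tri n (tri n (inv a b) b) b := (hinvol _ _).symm
        _ = tri n a b := by rw [hinv₂]
    have hCpos : ∀ t : ℤ, Cc n (fun i => x i + t) = c + 2 * t := by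
      intro t
      have h : (fun i => x i + t) = fun i => 1 * x i + t := by funext i; ring
      rw [h, Cc_affine, if_neg (Nat.not_even_iff_odd.mpr hodd)]; ring
    have hCneg : ∀ t : ℤ, Cc n (fun i => -x i + t) = -c + 2 * t := by
      intro t
      have h : (fun i => -x i + t) = fun i => (-1) * x i + t := by funext i; ring
      rw [h, Cc_affine, if_neg (Nat.not_even_iff_odd.mpr hodd)]; ring
    have hbridge : ∀ t t' : ℤ,
        ((fun i => x i + t) : Fin n → ℤ) = (fun i => -x i + t') → t' - c = t := by
      intro t t' h
      have hx0 : ∀ i, x i = x ⟨0, hn⟩ := by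
        intro i
        have h1 := congrFun h i
        have h2 := congrFun h ⟨0, hn⟩
        omega
      have hxconst : x = fun _ => x ⟨0, hn⟩ := funext hx0
      have hcval : c = 2 * x ⟨0, hn⟩ := by
        rw [hc_def]
        conv_lhs => rw [hxconst]
        rw [Cc_const, if_neg (Nat.not_even_iff_odd.mpr hodd)]
      have h2 := congrFun h ⟨0, hn⟩
      omega
    have hform : ∀ v, Relation.ReflTransGen
        (fun a b => ∃ s ∈ S, b = tri n a s ∨ b = inv a s) x v →
        (∃ t : ℤ, v = fun i => x i + t) ∨ (∃ t : ℤ, v = fun i => -x i + t) := by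
      intro v h
      induction h with
      | refl => exact Or.inl ⟨0, by funext i; simp⟩
      | @tail b v' _ hstep ih =>
        obtain ⟨s, _, hcase⟩ := hstep
        have hvs : v' = tri n b s := by
          rcases hcase with h' | h'
          · exact h'
          · rw [h', hinvo]
        rcases ih with ⟨t, hb⟩ | ⟨t, hb⟩
        · exact Or.inr ⟨Cc n s - t, by rw [hvs, htri, hb]; funext i; ring⟩
        · exact Or.inl ⟨Cc n s - t, by rw [hvs, htri, hb]; funext i; ring⟩
    have hdvd : ∀ m : ℕ, ∀ v, Relation.ReflTransGen
        (fun a b => ∃ s ∈ S, b = tri n a s ∨ b = inv a s) x v →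
        ∀ t : ℤ, ((v = fun i => x i + t) → (2 ^ m : ℤ) ∣ t) ∧
          ((v = fun i => -x i + t) → (2 ^ m : ℤ) ∣ (t - c)) := by
      intro m
      induction m with
      | zero => intro v _ t; constructor <;> intro _ <;> simp
      | succ m ih =>
        intro v h
        induction h with
        | refl =>
          intro t
          constructor
          · intro ht
            have h0 := congrFun ht ⟨0, hn⟩
            have : t = 0 := by linarith
            simp [this]
          · intro ht
            have h0 : ((fun i => x i + (0 : ℤ)) : Fin n → ℤ) = fun i => -x i + t := by
              rw [← ht]; funext i; ring
            have := hbridge 0 t h0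
            have ht0 : t - c = 0 := by linarith
            simp [ht0]
        | @tail b v' hxb hstep ihb =>
          obtain ⟨s, hs, hcase⟩ := hstep
          have hvs : v' = tri n b s := by
            rcases hcase with h' | h'
            · exact h'
            · rw [h', hinvo]
          have hsrt := hConn x hxS s hs
          have hsd := ih s hsrt
          obtain ⟨w, hw, hwd⟩ : ∃ w : ℤ, Cc n s = c + 2 * w ∧ (2 ^ m : ℤ) ∣ w := by
            rcases hform s hsrt with ⟨u, hu⟩ | ⟨u, hu⟩
            · exact ⟨u, by rw [hu, hCpos], (hsd u).1 hu⟩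
            · exact ⟨u - c, by rw [hu, hCneg]; ring, (hsd u).2 hu⟩
          have h2w : (2 ^ (m + 1) : ℤ) ∣ 2 * w := by
            obtain ⟨k, rfl⟩ := hwd
            exact ⟨k, by ring⟩
          rcases hform b hxb with ⟨t₀, hb⟩ | ⟨t₀, hb⟩
          · have ht₀ : (2 ^ (m + 1) : ℤ) ∣ t₀ := (ihb t₀).1 hb
            have hv : v' = fun i => -x i + (c + 2 * w - t₀) := by
              rw [hvs, htri, hb, hw]; funext i; ring
            intro t
            constructor
            · intro ht
              have hb2 := hbridge t (c + 2 * w - t₀) (ht.symm.trans hv)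
              have hteq : t = 2 * w - t₀ := by linarith
              rw [hteq]
              exact dvd_sub h2w ht₀
            · intro ht
              have h1 := congrFun (ht.symm.trans hv) ⟨0, hn⟩
              have hteq : t - c = 2 * w - t₀ := by linarith
              rw [hteq]
              exact dvd_sub h2w ht₀
          · have ht₀ : (2 ^ (m + 1) : ℤ) ∣ (t₀ - c) := (ihb t₀).2 hb
            have hv : v' = fun i => x i + (c + 2 * w - t₀) := by
              rw [hvs, htri, hb, hw]; funext i; ring
            intro t
            constructor
            · intro ht
              have h1 := congrFun (ht.symm.trans hv) ⟨0, hn⟩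
              have hteq : t = 2 * w - (t₀ - c) := by linarith
              rw [hteq]
              exact dvd_sub h2w ht₀
            · intro ht
              have hb2 := hbridge (c + 2 * w - t₀) t (hv.symm.trans ht)
              have hteq : t - c = 2 * w - (t₀ - c) := by linarith
              rw [hteq]
              exact dvd_sub h2w ht₀
    set y : Fin n → ℤ := fun i => -x i + c with hy_def
    set M : Set (Fin n → ℤ) := {x, y} with hM_def
    have hxM : x ∈ M := Set.mem_insert _ _
    have hyM : y ∈ M := Set.mem_insert_of_mem _ rfl
    have hSM : S ⊆ M := by
      intro v hv
      have hrt := hConn x hxS v hv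
      rcases hform v hrt with ⟨t, ht⟩ | ⟨t, ht⟩
      · have ht0 : t = 0 := dvd_all_pow_two t (fun m => (hdvd m v hrt t).1 ht)
        left
        rw [ht, ht0]; funext i; simp
      · have ht0 : t - c = 0 := dvd_all_pow_two _ (fun m => (hdvd m v hrt t).2 ht)
        right
        rw [ht]
        show (fun i => -x i + t) = y
        rw [hy_def]
        have : t = c := by linarith
        rw [this]
    have hCM : ∀ b ∈ M, Cc n b = c := by
      rintro b hb
      rcases hb with rfl | rfl
      · rfl
      · rw [hy_def, hCneg]; ring
    have htx : ∀ b ∈ M, tri n x b = y := by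
      intro b hb
      rw [htri, hCM b hb]
    have hty : ∀ b ∈ M, tri n y b = x := by
      intro b hb
      rw [htri, hCM b hb, hy_def]
      funext i
      show -((fun i => -x i + c) i) + c = x i
      simp
    have hMsub : IsSubrack (tri n) inv M := by
      intro a ha b hb
      rw [hinvo]
      rcases ha with rfl | rfl
      · rw [htx b hb]; exact ⟨hyM, hyM⟩
      · rw [hty b hb]; exact ⟨hxM, hxM⟩
    have hMconn : IsConnectedSubrack (tri n) inv M := by
      intro u hu v hv
      rcases hu with h1 | h1
      · rcases hv with h2 | h2
        · rw [h1, h2]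
        · rw [h1, h2]
          exact Relation.ReflTransGen.single ⟨x, hxM, Or.inl (htx x hxM).symm⟩
      · rcases hv with h2 | h2
        · rw [h1, h2]
          exact Relation.ReflTransGen.single ⟨x, hxM, Or.inl (hty x hxM).symm⟩
        · rw [h1, h2]
    have hMS : M ⊆ S := hMax M hMsub hMconn hxM
    have hyS : y ∈ S := hMS hyM
    rcases eq_or_ne y x with hyx | hyx
    · -- S = {x}
      have hSx : S = {x} := by
        apply Set.Subset.antisymm
        · intro v hv
          rcases hSM hv with h | h
          · rw [h]; rfl
          · rw [h, hyx]; rfl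
        · rintro v rfl; exact hxS
      refine ⟨1, fun _ => 0, ⟨fun a _ => trivial, fun a ha b hb _ => ?_, fun w _ => ?_⟩,
        fun a _ b _ => Subsingleton.elim _ _⟩
      · rw [hSx, Set.mem_singleton_iff] at ha hb; rw [ha, hb]
      · exact ⟨x, hxS, Subsingleton.elim _ _⟩
    · -- S has two elements, cyclic of order 2
      have h01 : (0 : ZMod 2) ≠ 1 := by decide
      have hw2 : ∀ w : ZMod 2, w = 0 ∨ w = 1 := by decide
      have hfx : (fun z : Fin n → ℤ => if z = x then (0 : ZMod 2) else 1) x = 0 :=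
        if_pos rfl
      have hfy : (fun z : Fin n → ℤ => if z = x then (0 : ZMod 2) else 1) y = 1 :=
        if_neg hyx
      refine ⟨2, fun z : Fin n → ℤ => if z = x then (0 : ZMod 2) else 1,
        ⟨fun a _ => trivial, ?_, ?_⟩, ?_⟩
      · intro a ha b hb hab
        rcases hSM ha with h1 | h1
        · rcases hSM hb with h2 | h2
          · rw [h1, h2]
          · rw [h1, h2, hfx, hfy] at hab
            exact absurd hab h01
        · rcases hSM hb with h2 | h2
          · rw [h1, h2, hfy, hfx] at hab
            exact absurd hab.symm h01
          · rw [h1, h2]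
      · intro w _
        rcases hw2 w with rfl | rfl
        · exact ⟨x, hxS, hfx⟩
        · exact ⟨y, hyS, hfy⟩
      · intro a ha b hb
        have hbM := hSM hb
        rcases hSM ha with h1 | h1
        · rw [h1, htx b hbM, hfy, hfx]
          decide
        · rw [h1, hty b hbM, hfx, hfy]
          decide
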